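/- Under Assumption 1, let H := log(ν/(LZ))/log(1 − β) and let C > 0. Let ρ, η ∈ [ρ_l, ρ_u] with ρ ≤ η, suppose D(ρ) > 1, and suppose η − ρ ≤ (β/(LZ))·((D(ρ) − 1)/(D(ρ)^H − 1))·D(ρ)^{−1}·C, where D(ρ)^H denotes the real power. Then for every natural number M with M ≤ H, the new costs satisfy |Σ_{j=1}^{M} ‖g^j(z₀, ρ)‖ − Σ_{j=1}^{M} ‖g^j(z₀, η)‖| ≤ C. -/

import Mathlib

/-- `gdIter f' ρ j z` is the `j`-fold iterate `g^j(z, ρ)` of the one-step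
gradient-descent map `g(z, ρ) = z - ρ • f' z`. -/
noncomputable def gdIter {E : Type*} [NormedAddCommGroup E] [Module ℝ E]
    (f' : E → E) (ρ : ℝ) : ℕ → E → E
  | 0, z => z
  | n + 1, z => gdIter f' ρ n z - ρ • f' (gdIter f' ρ n z)

section Aux

variable {E : Type*} [NormedAddCommGroup E] [InnerProductSpace ℝ E] [CompleteSpace E]

local notation "⟪" x ", " y "⟫" => @inner ℝ _ _ x y

lemma gd_dirDeriv (f : E → ℝ) (f' : E → E) (hdiff : ∀ x : E, HasGradientAt f (f' x) x)
    (x v : E) (t : ℝ) :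
    HasDerivAt (fun s : ℝ => f (x + s • v)) ⟪f' (x + t • v), v⟫ t := by
  have hc : HasDerivAt (fun s : ℝ => x + s • v) v t := by
    simpa using (((hasDerivAt_id t).smul_const v).const_add x)
  have hf : HasFDerivAt f (InnerProductSpace.toDual ℝ E (f' (x + t • v))) (x + t • v) :=
    hdiff (x + t • v)
  have := hf.comp_hasDerivAt t hc
  simpa [InnerProductSpace.toDual_apply_apply, Function.comp_def] using this

lemma gd_convex_lower (f : E → ℝ) (f' : E → E)
    (hconv : ConvexOn ℝ Set.univ f) (hdiff : ∀ x : E, HasGradientAt f (f' x) x)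
    (x y : E) : f x + ⟪f' x, y - x⟫ ≤ f y := by
  have hkey : ConvexOn ℝ Set.univ (fun s : ℝ => f (x + s • (y - x))) := by
    have h := hconv.comp_affineMap (AffineMap.lineMap x y)
    have he : (fun s : ℝ => f (x + s • (y - x))) = f ∘ (AffineMap.lineMap x y : ℝ →ᵃ[ℝ] E) := by
      funext s
      simp [Function.comp, AffineMap.lineMap_apply, add_comm]
    rw [he]
    simpa using h
  have hd := gd_dirDeriv f f' hdiff x (y - x) 0
  simp only [zero_smul, add_zero] at hd
  have hslope := hkey.le_slope_of_hasDerivAt (Set.mem_univ (0:ℝ)) (Set.mem_univ (1:ℝ))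
    one_pos hd
  have h1 : (fun s : ℝ => f (x + s • (y - x))) 1 = f y := by
    simp
  have h0 : (fun s : ℝ => f (x + s • (y - x))) 0 = f x := by simp
  rw [slope_def_field] at hslope
  simp only [h1, h0] at hslope
  norm_num at hslope
  linarith


lemma gd_smooth_upper (f : E → ℝ) (f' : E → E) (L : ℝ) (hL : 0 < L)
    (hdiff : ∀ x : E, HasGradientAt f (f' x) x)
    (hlip : ∀ z₁ z₂ : E, ‖f' z₁ - f' z₂‖ ≤ L * ‖z₁ - z₂‖)
    (x y : E) : f y ≤ f x + ⟪f' x, y - x⟫ + L / 2 * ‖y - x‖ ^ 2 := by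
  set v := y - x with hv
  set φ : ℝ → ℝ := fun t => f (x + t • v) - t * ⟪f' x, v⟫ - L / 2 * t ^ 2 * ‖v‖ ^ 2 with hφ
  have hder : ∀ t : ℝ, HasDerivAt φ (⟪f' (x + t • v), v⟫ - ⟪f' x, v⟫ - L * t * ‖v‖ ^ 2) t := by
    intro t
    have h1 := gd_dirDeriv f f' hdiff x v t
    have h2 : HasDerivAt (fun t : ℝ => t * ⟪f' x, v⟫) ⟪f' x, v⟫ t := by
      simpa using (hasDerivAt_id t).mul_const ⟪f' x, v⟫
    have h3 : HasDerivAt (fun t : ℝ => L / 2 * t ^ 2 * ‖v‖ ^ 2) (L * t * ‖v‖ ^ 2) t := by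
      have h4 := ((hasDerivAt_pow 2 t).const_mul (L / 2)).mul_const (‖v‖ ^ 2)
      refine h4.congr_deriv ?_
      ring
    exact (h1.sub h2).sub h3
  have hanti : AntitoneOn φ (Set.Icc (0:ℝ) 1) := by
    apply antitoneOn_of_deriv_nonpos (convex_Icc 0 1)
    · exact fun t _ => (hder t).continuousAt.continuousWithinAt
    · intro t _
      exact ((hder t).differentiableAt).differentiableWithinAt
    · intro t ht
      rw [interior_Icc] at ht
      rw [(hder t).deriv]
      have hb : ⟪f' (x + t • v), v⟫ - ⟪f' x, v⟫ ≤ L * t * ‖v‖ ^ 2 := by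
        have hc : ⟪f' (x + t • v) - f' x, v⟫ ≤ ‖f' (x + t • v) - f' x‖ * ‖v‖ :=
          real_inner_le_norm _ _
        have hd : ‖f' (x + t • v) - f' x‖ * ‖v‖ ≤ (L * ‖(x + t • v) - x‖) * ‖v‖ :=
          mul_le_mul_of_nonneg_right (hlip _ _) (norm_nonneg _)
        have he : ‖(x + t • v) - x‖ = t * ‖v‖ := by
          simp [norm_smul, abs_of_pos ht.1]
        rw [inner_sub_left] at hc
        rw [he] at hd
        nlinarith [hc, hd]
      linarith
  have h01 := hanti (Set.left_mem_Icc.mpr zero_le_one) (Set.right_mem_Icc.mpr zero_le_one)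
    zero_le_one
  have hφ1 : φ 1 = f y - ⟪f' x, v⟫ - L / 2 * ‖v‖ ^ 2 := by
    have hxy : x + v = y := by rw [hv]; abel
    simp [hφ, hxy]
  have hφ0 : φ 0 = f x := by simp [hφ]
  rw [hφ1, hφ0] at h01
  linarith

lemma gd_strong_lower (f : E → ℝ) (f' : E → E) (L : ℝ) (hL : 0 < L)
    (hconv : ConvexOn ℝ Set.univ f) (hdiff : ∀ x : E, HasGradientAt f (f' x) x)
    (hlip : ∀ z₁ z₂ : E, ‖f' z₁ - f' z₂‖ ≤ L * ‖z₁ - z₂‖)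
    (x y : E) : f x + ⟪f' x, y - x⟫ + 1 / (2 * L) * ‖f' y - f' x‖ ^ 2 ≤ f y := by
  set d := f' y - f' x with hdd
  set w := y - L⁻¹ • d with hw
  have h1 := gd_convex_lower f f' hconv hdiff x w
  have h2 := gd_smooth_upper f f' L hL hdiff hlip y w
  have e1 : ⟪f' x, w - x⟫ = ⟪f' x, y - x⟫ - L⁻¹ * ⟪f' x, d⟫ := by
    have : w - x = (y - x) - L⁻¹ • d := by rw [hw]; abel
    rw [this, inner_sub_right, real_inner_smul_right]
  have e2 : ⟪f' y, w - y⟫ = -(L⁻¹ * ⟪f' y, d⟫) := by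
    have : w - y = -(L⁻¹ • d) := by rw [hw]; abel
    rw [this, inner_neg_right, real_inner_smul_right]
  have e3 : ‖w - y‖ ^ 2 = L⁻¹ ^ 2 * ‖d‖ ^ 2 := by
    have : w - y = -(L⁻¹ • d) := by rw [hw]; abel
    rw [this, norm_neg, norm_smul]
    rw [Real.norm_eq_abs, abs_inv, abs_of_pos hL]
    ring
  have e4 : ⟪f' y, d⟫ - ⟪f' x, d⟫ = ‖d‖ ^ 2 := by
    rw [← inner_sub_left, ← hdd, real_inner_self_eq_norm_sq]
  have h5 : L / 2 * (L⁻¹ ^ 2 * ‖d‖ ^ 2) = 1 / (2 * L) * ‖d‖ ^ 2 := by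
    field_simp
  rw [e1] at h1
  rw [e2, e3, h5] at h2
  have h6 : L⁻¹ * ⟪f' y, d⟫ - L⁻¹ * ⟪f' x, d⟫ = L⁻¹ * ‖d‖ ^ 2 := by
    rw [← mul_sub, e4]
  have h7 : L⁻¹ * ‖d‖ ^ 2 - 1 / (2 * L) * ‖d‖ ^ 2 = 1 / (2 * L) * ‖d‖ ^ 2 := by
    field_simp
    ring
  linarith

lemma gd_coco (f : E → ℝ) (f' : E → E) (L : ℝ) (hL : 0 < L)
    (hconv : ConvexOn ℝ Set.univ f) (hdiff : ∀ x : E, HasGradientAt f (f' x) x)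
    (hlip : ∀ z₁ z₂ : E, ‖f' z₁ - f' z₂‖ ≤ L * ‖z₁ - z₂‖)
    (x y : E) : L⁻¹ * ‖f' x - f' y‖ ^ 2 ≤ ⟪f' x - f' y, x - y⟫ := by
  have h1 := gd_strong_lower f f' L hL hconv hdiff hlip x y
  have h2 := gd_strong_lower f f' L hL hconv hdiff hlip y x
  have hn : ‖f' x - f' y‖ = ‖f' y - f' x‖ := norm_sub_rev _ _
  have hs : ⟪f' x, y - x⟫ + ⟪f' y, x - y⟫ = -⟪f' x - f' y, x - y⟫ := by
    have : y - x = -(x - y) := by abel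
    rw [this, inner_neg_right, inner_sub_left]
    ring
  have hinv : L⁻¹ = 1 / (2 * L) + 1 / (2 * L) := by
    field_simp
    ring
  rw [hn] at h2
  rw [hn, hinv]
  linarith

lemma gd_step_lip (f : E → ℝ) (f' : E → E) (L : ℝ) (hL : 0 < L)
    (hconv : ConvexOn ℝ Set.univ f) (hdiff : ∀ x : E, HasGradientAt f (f' x) x)
    (hlip : ∀ z₁ z₂ : E, ‖f' z₁ - f' z₂‖ ≤ L * ‖z₁ - z₂‖)
    (ρ : ℝ) (hρ0 : 0 ≤ ρ) (h2 : 2 ≤ L * ρ) (x y : E) :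
    ‖(x - ρ • f' x) - (y - ρ • f' y)‖ ≤ (L * ρ - 1) * ‖x - y‖ := by
  set u := x - y with hu
  set w := f' x - f' y with hww
  have hv : (x - ρ • f' x) - (y - ρ • f' y) = u - ρ • w := by
    rw [hu, hww, smul_sub]; abel
  have hco := gd_coco f f' L hL hconv hdiff hlip x y
  have hco' : ‖w‖ ^ 2 ≤ L * ⟪w, u⟫ := by
    have := mul_le_mul_of_nonneg_left hco hL.le
    rw [← mul_assoc, mul_inv_cancel₀ hL.ne', one_mul] at this
    exact this
  have hwn : ‖w‖ ≤ L * ‖u‖ := hlip x y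
  have hwn2 : ‖w‖ ^ 2 ≤ L ^ 2 * ‖u‖ ^ 2 := by nlinarith [norm_nonneg w, norm_nonneg u]
  have expand : ‖u - ρ • w‖ ^ 2 = ‖u‖ ^ 2 - 2 * ρ * ⟪u, w⟫ + ρ ^ 2 * ‖w‖ ^ 2 := by
    rw [norm_sub_sq_real, real_inner_smul_right, norm_smul, Real.norm_eq_abs,
      abs_of_nonneg hρ0]
    ring
  have hcomm : ⟪u, w⟫ = ⟪w, u⟫ := real_inner_comm _ _
  have hsq : ‖u - ρ • w‖ ^ 2 ≤ ((L * ρ - 1) * ‖u‖) ^ 2 := by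
    rw [expand, hcomm]
    nlinarith [mul_nonneg hρ0 (sub_nonneg.mpr hco'),
      mul_nonneg (mul_nonneg hρ0 (by linarith : (0:ℝ) ≤ L * ρ - 2))
        (sub_nonneg.mpr hwn2), hL, sq_nonneg ‖u‖]
  rw [hv]
  have hrhs : 0 ≤ (L * ρ - 1) * ‖u‖ := mul_nonneg (by linarith) (norm_nonneg _)
  exact le_of_pow_le_pow_left₀ two_ne_zero hrhs hsq

end Aux

lemma gdIter_succ {E : Type*} [NormedAddCommGroup E] [Module ℝ E]
    (f' : E → E) (ρ : ℝ) (n : ℕ) (z : E) :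
    gdIter f' ρ (n + 1) z = gdIter f' ρ n z - ρ • f' (gdIter f' ρ n z) := rfl

/-- Error estimation of the new cost function for gradient descent (Theorem 4):
if `η - ρ ≤ (β/(LZ)) · ((D(ρ)-1)/(D(ρ)^H-1)) · D(ρ)⁻¹ · C` (real power `D(ρ)^H`),
then the new costs (truncated sums of the distances to the optimum) differ by at
most `C`. -/
theorem gd_new_cost_error_estimation
    {E : Type*} [NormedAddCommGroup E] [InnerProductSpace ℝ E] [CompleteSpace E]
    (f : E → ℝ) (f' : E → E) (L : ℝ) (hL : 0 < L)
    (hconv : ConvexOn ℝ Set.univ f)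
    (hdiff : ∀ x : E, HasGradientAt f (f' x) x)
    (hlip : ∀ z₁ z₂ : E, ‖f' z₁ - f' z₂‖ ≤ L * ‖z₁ - z₂‖)
    (ρl ρu : ℝ) (hρl : 0 < ρl) (hρlu : ρl ≤ ρu)
    (β : ℝ) (hβ : β ∈ Set.Ioo (0 : ℝ) 1)
    (hcontract : ∀ z : E, ∀ ρ' ∈ Set.Icc ρl ρu, ‖z - ρ' • f' z‖ ≤ (1 - β) * ‖z‖)
    (hgrad0 : f' 0 = 0)
    (ν Z : ℝ) (hν : 0 < ν) (hνLZ : ν < L * Z)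
    (z₀ : E) (hz₀ν : ν < ‖z₀‖) (hz₀Z : ‖z₀‖ ≤ Z)
    (H : ℝ) (hH : H = Real.log (ν / (L * Z)) / Real.log (1 - β))
    (C : ℝ) (hC : 0 < C)
    (ρ η : ℝ) (hρ : ρ ∈ Set.Icc ρl ρu) (hη : η ∈ Set.Icc ρl ρu) (hρη : ρ ≤ η)
    (hD : 1 < max 1 (L * ρ - 1))
    (hgap : η - ρ ≤ β / (L * Z) *
      ((max 1 (L * ρ - 1) - 1) / ((max 1 (L * ρ - 1)) ^ H - 1)) *
      (max 1 (L * ρ - 1))⁻¹ * C) :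
    ∀ M : ℕ, (M : ℝ) ≤ H →
      |(∑ j ∈ Finset.Icc 1 M, ‖gdIter f' ρ j z₀‖) -
        ∑ j ∈ Finset.Icc 1 M, ‖gdIter f' η j z₀‖| ≤ C := by
  intro M hM
  obtain ⟨hβ0, hβ1⟩ := hβ
  have hD1 : 1 < L * ρ - 1 := (lt_max_iff.mp hD).resolve_left (lt_irrefl 1)
  rw [max_eq_right hD1.le] at hgap
  have h2L : 2 ≤ L * ρ := by linarith
  have hρ0 : 0 ≤ ρ := (lt_of_lt_of_le hρl hρ.1).le
  have hLZ : 0 < L * Z := lt_trans hν hνLZ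
  have hZ : 0 < Z := by nlinarith
  have hc0 : (0:ℝ) ≤ 1 - β := by linarith
  have hK0 : (0:ℝ) ≤ (η - ρ) * (L * Z) := mul_nonneg (by linarith) hLZ.le
  have hDr0 : (0:ℝ) < L * ρ - 1 := by linarith
  have hH0 : 0 < H := by
    rw [hH]
    apply div_pos_iff.mpr
    refine Or.inr ⟨?_, ?_⟩
    · exact Real.log_neg (by positivity) ((div_lt_one hLZ).mpr hνLZ)
    · exact Real.log_neg (by linarith) (by linarith)
  have hP1 : 1 < (L * ρ - 1) ^ H :=
    (Real.one_lt_rpow_iff_of_pos hDr0).mpr (Or.inl ⟨hD1, hH0⟩)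
  -- norm decay of the η-iterates
  have hbn : ∀ j : ℕ, ‖gdIter f' η j z₀‖ ≤ (1 - β) ^ j * ‖z₀‖ := by
    intro j
    induction j with
    | zero => simp [gdIter]
    | succ n ih =>
      have h := hcontract (gdIter f' η n z₀) η hη
      calc ‖gdIter f' η (n + 1) z₀‖
          = ‖gdIter f' η n z₀ - η • f' (gdIter f' η n z₀)‖ := by rw [gdIter_succ]
        _ ≤ (1 - β) * ‖gdIter f' η n z₀‖ := h
        _ ≤ (1 - β) * ((1 - β) ^ n * ‖z₀‖) := by
            exact mul_le_mul_of_nonneg_left ih hc0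
        _ = (1 - β) ^ (n + 1) * ‖z₀‖ := by ring
  -- the key recursive estimate
  have hE : ∀ j : ℕ, ‖gdIter f' ρ j z₀ - gdIter f' η j z₀‖ * ((L * ρ - 1) - (1 - β)) ≤
      (η - ρ) * (L * Z) * ((L * ρ - 1) ^ j - (1 - β) ^ j) := by
    intro j
    induction j with
    | zero => simp [gdIter]
    | succ n ih =>
      have hdecomp : gdIter f' ρ (n + 1) z₀ - gdIter f' η (n + 1) z₀ =
          ((gdIter f' ρ n z₀ - ρ • f' (gdIter f' ρ n z₀)) -
            (gdIter f' η n z₀ - ρ • f' (gdIter f' η n z₀))) +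
            (η - ρ) • f' (gdIter f' η n z₀) := by
        rw [gdIter_succ, gdIter_succ, sub_smul]
        abel
      have h1 : ‖(gdIter f' ρ n z₀ - ρ • f' (gdIter f' ρ n z₀)) -
            (gdIter f' η n z₀ - ρ • f' (gdIter f' η n z₀))‖ ≤
          (L * ρ - 1) * ‖gdIter f' ρ n z₀ - gdIter f' η n z₀‖ :=
        gd_step_lip f f' L hL hconv hdiff hlip ρ hρ0 h2L _ _
      have hfb : ‖f' (gdIter f' η n z₀)‖ ≤ L * ‖gdIter f' η n z₀‖ := by
        simpa [hgrad0] using hlip (gdIter f' η n z₀) 0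
      have h2 : ‖(η - ρ) • f' (gdIter f' η n z₀)‖ ≤
          (η - ρ) * (L * Z) * (1 - β) ^ n := by
        rw [norm_smul, Real.norm_eq_abs, abs_of_nonneg (by linarith : (0:ℝ) ≤ η - ρ)]
        have hbb := hbn n
        have hp : (0:ℝ) ≤ (1 - β) ^ n := pow_nonneg hc0 n
        have ha : ‖f' (gdIter f' η n z₀)‖ ≤ L * ((1 - β) ^ n * ‖z₀‖) :=
          hfb.trans (mul_le_mul_of_nonneg_left hbb hL.le)
        have hb2 : L * ((1 - β) ^ n * ‖z₀‖) ≤ L * ((1 - β) ^ n * Z) :=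
          mul_le_mul_of_nonneg_left (mul_le_mul_of_nonneg_left hz₀Z hp) hL.le
        calc (η - ρ) * ‖f' (gdIter f' η n z₀)‖
            ≤ (η - ρ) * (L * ((1 - β) ^ n * Z)) :=
              mul_le_mul_of_nonneg_left (ha.trans hb2) (by linarith)
          _ = (η - ρ) * (L * Z) * (1 - β) ^ n := by ring
      have htri : ‖gdIter f' ρ (n + 1) z₀ - gdIter f' η (n + 1) z₀‖ ≤
          (L * ρ - 1) * ‖gdIter f' ρ n z₀ - gdIter f' η n z₀‖ +
            (η - ρ) * (L * Z) * (1 - β) ^ n := by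
        rw [hdecomp]
        exact (norm_add_le _ _).trans (by linarith)
      have hd0 : (0:ℝ) ≤ (L * ρ - 1) - (1 - β) := by linarith
      have hA := mul_le_mul_of_nonneg_right htri hd0
      have hB := mul_le_mul_of_nonneg_left ih hDr0.le
      have hexp : (η - ρ) * (L * Z) * ((L * ρ - 1) ^ (n + 1) - (1 - β) ^ (n + 1)) =
          (L * ρ - 1) * ((η - ρ) * (L * Z) * ((L * ρ - 1) ^ n - (1 - β) ^ n)) +
          (η - ρ) * (L * Z) * (1 - β) ^ n * ((L * ρ - 1) - (1 - β)) := by ring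
      rw [hexp]
      linarith
  -- per-term bound with β
  have hterm : ∀ j : ℕ, ‖gdIter f' ρ j z₀ - gdIter f' η j z₀‖ * β ≤
      (η - ρ) * (L * Z) * (L * ρ - 1) ^ j := by
    intro j
    have h := hE j
    have h1 : ‖gdIter f' ρ j z₀ - gdIter f' η j z₀‖ * β ≤
        ‖gdIter f' ρ j z₀ - gdIter f' η j z₀‖ * ((L * ρ - 1) - (1 - β)) :=
      mul_le_mul_of_nonneg_left (by linarith) (norm_nonneg _)
    nlinarith [pow_nonneg hc0 j]
  -- sum bounds
  have hsum1 : |(∑ j ∈ Finset.Icc 1 M, ‖gdIter f' ρ j z₀‖) -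
        ∑ j ∈ Finset.Icc 1 M, ‖gdIter f' η j z₀‖| ≤
      ∑ j ∈ Finset.Icc 1 M, ‖gdIter f' ρ j z₀ - gdIter f' η j z₀‖ := by
    rw [← Finset.sum_sub_distrib]
    refine (Finset.abs_sum_le_sum_abs _ _).trans (Finset.sum_le_sum ?_)
    intro j _
    exact abs_norm_sub_norm_le _ _
  have hgeom : ∑ j ∈ Finset.Icc 1 M, (L * ρ - 1) ^ j =
      ((L * ρ - 1) ^ (M + 1) - (L * ρ - 1)) / ((L * ρ - 1) - 1) := by
    rw [← Finset.Ico_add_one_right_eq_Icc, geom_sum_Ico (by linarith : L * ρ - 1 ≠ 1)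
      (Nat.le_add_left 1 M)]
    rw [pow_one]
  have hsum2 : (∑ j ∈ Finset.Icc 1 M, ‖gdIter f' ρ j z₀ - gdIter f' η j z₀‖) * β ≤
      (η - ρ) * (L * Z) *
        (((L * ρ - 1) ^ (M + 1) - (L * ρ - 1)) / ((L * ρ - 1) - 1)) := by
    rw [Finset.sum_mul, ← hgeom, Finset.mul_sum]
    exact Finset.sum_le_sum fun j _ => hterm j
  -- combine with the gap hypothesis
  have hgap' : (η - ρ) * (((L * ρ - 1) ^ H - 1) * (L * ρ - 1) * (L * Z)) ≤
      β * ((L * ρ - 1) - 1) * C := by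
    have hpos : (0:ℝ) < ((L * ρ - 1) ^ H - 1) * (L * ρ - 1) * (L * Z) :=
      mul_pos (mul_pos (by linarith) hDr0) hLZ
    have hmul := mul_le_mul_of_nonneg_right hgap hpos.le
    have hval : β / (L * Z) * (((L * ρ - 1) - 1) / ((L * ρ - 1) ^ H - 1)) *
        (L * ρ - 1)⁻¹ * C * (((L * ρ - 1) ^ H - 1) * (L * ρ - 1) * (L * Z)) =
        β * ((L * ρ - 1) - 1) * C := by
      have hB : ((L * ρ - 1) ^ H - 1) ≠ 0 := ne_of_gt (by linarith)
      have hDne : (L * ρ - 1) ≠ 0 := ne_of_gt hDr0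
      have hLZne : (L * Z) ≠ 0 := ne_of_gt hLZ
      field_simp
    rw [hval] at hmul
    exact hmul
  have hm : (L * ρ - 1) ^ M ≤ (L * ρ - 1) ^ H := by
    rw [← Real.rpow_natCast (L * ρ - 1) M]
    exact Real.rpow_le_rpow_of_exponent_le hD1.le hM
  have hDM : (L * ρ - 1) ^ (M + 1) - (L * ρ - 1) ≤
      (L * ρ - 1) * ((L * ρ - 1) ^ H - 1) := by
    have hp : (L * ρ - 1) ^ (M + 1) - (L * ρ - 1) =
        (L * ρ - 1) * ((L * ρ - 1) ^ M - 1) := by ring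
    rw [hp]
    exact mul_le_mul_of_nonneg_left (by linarith) hDr0.le
  have hd1 : (0:ℝ) < (L * ρ - 1) - 1 := by linarith
  have h3 : (η - ρ) * (L * Z) *
      (((L * ρ - 1) ^ (M + 1) - (L * ρ - 1)) / ((L * ρ - 1) - 1)) ≤ C * β := by
    rw [← mul_div_assoc, div_le_iff₀ hd1]
    have h4 := mul_le_mul_of_nonneg_left hDM hK0
    linarith [h4, hgap']
  have hS : (∑ j ∈ Finset.Icc 1 M, ‖gdIter f' ρ j z₀ - gdIter f' η j z₀‖) ≤ C :=
    le_of_mul_le_mul_right (by linarith [hsum2.trans h3]) hβ0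
  exact hsum1.trans hS
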